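/- Let P₀ ∈ ℝ² be the point with pair (1 + (4/23)√69, −(4/23)√69). Then the inhomogeneous minimum of P₀ with respect to the norm form of ℚ(√69) equals (165 − 15√69)/46; that is, inf over α ∈ O_K of |1 + (4/23)√69 − α| · |−(4/23)√69 − α'| = (165 − 15√69)/46, where α' denotes the conjugate of α, and the infimum is attained at α = (5 + √69)/2. -/

import Mathlib

noncomputable section

/-- `√69` as a real number. -/
def s69 : ℝ := Real.sqrt 69

private lemma s69_sq : s69 ^ 2 = 69 := Real.sq_sqrt (by norm_num)

private lemma s69_pos : 0 < s69 := Real.sqrt_pos.mpr (by norm_num)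

private lemma s69_lb : 8.3066 < s69 := by nlinarith [s69_sq, s69_pos]

private lemma s69_ub : s69 < 8.3067 := by nlinarith [s69_sq, s69_pos]

/-- Values of the quadratic form `3k² - 23m²` with `k ≡ 8 [23]`, `k ≡ m [2]`
have absolute value at least 100. -/
private lemma umin (b k m : ℤ) (hk : k = 8 - 23 * b) (hpar : (k - m) % 2 = 0) :
    100 ≤ |3 * k ^ 2 - 23 * m ^ 2| := by
  by_contra hcon
  push_neg at hcon
  rw [abs_lt] at hcon
  obtain ⟨t1, ht1⟩ : ∃ t, 3 * k ^ 2 - 23 * m ^ 2 = 4 * t := by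
    obtain ⟨c, hc⟩ : ∃ c, k = m + 2 * c := ⟨(k - m) / 2, by omega⟩
    exact ⟨3 * c ^ 2 + 3 * c * m - 5 * m ^ 2, by subst hc; ring⟩
  obtain ⟨t2, ht2⟩ : ∃ t, 3 * k ^ 2 - 23 * m ^ 2 - 8 = 23 * t := by
    exact ⟨69 * b ^ 2 - 48 * b + 8 - m ^ 2, by subst hk; ring⟩
  rw [ht1] at hcon
  rw [ht1] at ht2
  have h8 : t1 = 2 ∨ t1 = -21 := by omega
  rcases h8 with h8 | h8
  · -- u = 8 : impossible mod 3
    have hEq : 3 * k ^ 2 - 23 * m ^ 2 = 8 := by rw [ht1, h8]; norm_num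
    have hz : ((3 * k ^ 2 - 23 * m ^ 2 : ℤ) : ZMod 3) = ((8 : ℤ) : ZMod 3) := by rw [hEq]
    push_cast at hz
    have hh : ∀ K M : ZMod 3, 3 * K ^ 2 - 23 * M ^ 2 ≠ 8 := by decide
    exact hh _ _ hz
  · -- u = -84 : impossible (descends to k² - 69n² = -28, impossible mod 7/49)
    have hEq : 3 * k ^ 2 - 23 * m ^ 2 = -84 := by rw [ht1, h8]; norm_num
    have hm3 : (3 : ℤ) ∣ m := by
      have hz : ((3 * k ^ 2 - 23 * m ^ 2 : ℤ) : ZMod 3) = ((-84 : ℤ) : ZMod 3) := by rw [hEq]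
      push_cast at hz
      have hh : ∀ K M : ZMod 3, 3 * K ^ 2 - 23 * M ^ 2 = -84 → M = 0 := by decide
      exact (ZMod.intCast_zmod_eq_zero_iff_dvd m 3).mp (hh _ _ hz)
    obtain ⟨n, rfl⟩ := hm3
    have hEq2 : k ^ 2 - 69 * n ^ 2 = -28 := by linarith
    have h7 : (7 : ℤ) ∣ k ∧ (7 : ℤ) ∣ n := by
      have hz : ((k ^ 2 - 69 * n ^ 2 : ℤ) : ZMod 7) = ((-28 : ℤ) : ZMod 7) := by rw [hEq2]
      push_cast at hz
      have hh : ∀ K N : ZMod 7, K ^ 2 - 69 * N ^ 2 = -28 → K = 0 ∧ N = 0 := by decide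
      obtain ⟨h1, h2⟩ := hh _ _ hz
      exact ⟨(ZMod.intCast_zmod_eq_zero_iff_dvd k 7).mp h1,
        (ZMod.intCast_zmod_eq_zero_iff_dvd n 7).mp h2⟩
    obtain ⟨⟨k1, rfl⟩, ⟨n1, rfl⟩⟩ := h7
    have h49 : 49 * (k1 ^ 2 - 69 * n1 ^ 2) = -28 := by linarith
    obtain ⟨t, ht⟩ : ∃ t, k1 ^ 2 - 69 * n1 ^ 2 = t := ⟨_, rfl⟩
    rw [ht] at h49
    omega

private lemma best (u1 u2 j : ℤ) (h1 : 100 ≤ |u1|) (h2 : 100 ≤ |u2|)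
    (hd : u1 - u2 = 92 * j) : 9200 * |j| - 10000 ≤ |u1 * u2| := by
  have htri : |u1 - u2| ≤ |u1| + |u2| := by
    simpa [sub_eq_add_neg] using abs_add_le u1 (-u2)
  have h92 : |u1 - u2| = 92 * |j| := by rw [hd, abs_mul]; norm_num
  rw [abs_mul]
  nlinarith [mul_nonneg (sub_nonneg.mpr h1) (sub_nonneg.mpr h2)]

set_option maxHeartbeats 1000000 in
/-- The core Diophantine inequality. -/
private lemma core (j k : ℤ) (hk : ∃ c, k = 8 - 23 * c) (hpar : (j + k) % 2 = 1) :
    990 - 90 * s69 ≤ |(3 * (k : ℝ) + s69) ^ 2 - 69 * (j : ℝ) ^ 2| := by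
  obtain ⟨b, hb⟩ := hk
  by_contra hcon
  push_neg at hcon
  obtain ⟨hlo, hhi⟩ := abs_lt.mp hcon
  have hsplit : b = -1 ∨ b = 0 ∨ b = 1 ∨ b = 2 ∨ (b ≤ -2 ∨ 3 ≤ b) := by omega
  rcases hsplit with rfl | rfl | rfl | rfl | hbig
  · -- k = 31, j even
    norm_num at hb
    subst hb
    push_cast at hlo hhi
    have hj : j ≤ -14 ∨ (-12 ≤ j ∧ j ≤ 12) ∨ 14 ≤ j := by omega
    rcases hj with h | h | h
    · have h1 : (196 : ℝ) ≤ (j : ℝ) ^ 2 := by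
        exact_mod_cast (by nlinarith : (196 : ℤ) ≤ j ^ 2)
      nlinarith [s69_sq, s69_ub]
    · have h1 : ((j : ℝ)) ^ 2 ≤ 144 := by
        exact_mod_cast (by nlinarith [h.1, h.2] : j ^ 2 ≤ (144 : ℤ))
      nlinarith [s69_sq, s69_lb]
    · have h1 : (196 : ℝ) ≤ (j : ℝ) ^ 2 := by
        exact_mod_cast (by nlinarith : (196 : ℤ) ≤ j ^ 2)
      nlinarith [s69_sq, s69_ub]
  · -- k = 8, j odd
    norm_num at hb
    subst hb
    push_cast at hlo hhi
    have hj : j ≤ -5 ∨ (-3 ≤ j ∧ j ≤ 3) ∨ 5 ≤ j := by omega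
    rcases hj with h | h | h
    · have h1 : (25 : ℝ) ≤ (j : ℝ) ^ 2 := by
        exact_mod_cast (by nlinarith : (25 : ℤ) ≤ j ^ 2)
      nlinarith [s69_sq, s69_pos]
    · have h1 : ((j : ℝ)) ^ 2 ≤ 9 := by
        exact_mod_cast (by nlinarith [h.1, h.2] : j ^ 2 ≤ (9 : ℤ))
      nlinarith [s69_sq, s69_lb]
    · have h1 : (25 : ℝ) ≤ (j : ℝ) ^ 2 := by
        exact_mod_cast (by nlinarith : (25 : ℤ) ≤ j ^ 2)
      nlinarith [s69_sq, s69_pos]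
  · -- k = -15, j even
    norm_num at hb
    subst hb
    push_cast at hlo hhi
    have hj : j ≤ -6 ∨ (-4 ≤ j ∧ j ≤ 4) ∨ 6 ≤ j := by omega
    rcases hj with h | h | h
    · have h1 : (36 : ℝ) ≤ (j : ℝ) ^ 2 := by
        exact_mod_cast (by nlinarith : (36 : ℤ) ≤ j ^ 2)
      nlinarith [s69_sq, s69_lb]
    · have h1 : ((j : ℝ)) ^ 2 ≤ 16 := by
        exact_mod_cast (by nlinarith [h.1, h.2] : j ^ 2 ≤ (16 : ℤ))
      nlinarith [s69_sq]
    · have h1 : (36 : ℝ) ≤ (j : ℝ) ^ 2 := by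
        exact_mod_cast (by nlinarith : (36 : ℤ) ≤ j ^ 2)
      nlinarith [s69_sq, s69_lb]
  · -- k = -38, j odd
    norm_num at hb
    subst hb
    push_cast at hlo hhi
    have hj : j ≤ -13 ∨ (-11 ≤ j ∧ j ≤ 11) ∨ 13 ≤ j := by omega
    rcases hj with h | h | h
    · have h1 : (169 : ℝ) ≤ (j : ℝ) ^ 2 := by
        exact_mod_cast (by nlinarith : (169 : ℤ) ≤ j ^ 2)
      nlinarith [s69_sq, s69_lb]
    · have h1 : ((j : ℝ)) ^ 2 ≤ 121 := by
        exact_mod_cast (by nlinarith [h.1, h.2] : j ^ 2 ≤ (121 : ℤ))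
      nlinarith [s69_sq, s69_ub]
    · have h1 : (169 : ℝ) ≤ (j : ℝ) ^ 2 := by
        exact_mod_cast (by nlinarith : (169 : ℤ) ≤ j ^ 2)
      nlinarith [s69_sq, s69_lb]
  · -- |k| ≥ 53 : the asymptotic regime
    set u1 : ℤ := 3 * k ^ 2 - 23 * (j - 1) ^ 2 with hu1def
    set u2 : ℤ := 3 * k ^ 2 - 23 * (j + 1) ^ 2 with hu2def
    have hu1 : 100 ≤ |u1| := umin b k (j - 1) hb (by omega)
    have hu2 : 100 ≤ |u2| := umin b k (j + 1) hb (by omega)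
    have hbd : 9200 * |j| - 10000 ≤ |u1 * u2| := best u1 u2 j hu1 hu2 (by rw [hu1def, hu2def]; ring)
    set Jr : ℝ := |(j : ℝ)| with hJr
    set Kr : ℝ := |(k : ℝ)| with hKr
    have hJ0 : 0 ≤ Jr := abs_nonneg _
    have hK53 : (53 : ℝ) ≤ Kr := by
      have : (53 : ℤ) ≤ |k| := by
        rcases hbig with h | h
        · rw [abs_of_nonneg (by omega : (0:ℤ) ≤ k)]; omega
        · rw [abs_of_nonpos (by omega : k ≤ (0:ℤ))]; omega
      calc (53 : ℝ) = ((53 : ℤ) : ℝ) := by norm_num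
        _ ≤ ((|k| : ℤ) : ℝ) := by exact_mod_cast this
        _ = Kr := by rw [hKr, Int.cast_abs]
    have hJsq : (j : ℝ) ^ 2 = Jr ^ 2 := (sq_abs _).symm
    have hKsq : (k : ℝ) ^ 2 = Kr ^ 2 := (sq_abs _).symm
    have hks : -(Kr * s69) ≤ (k : ℝ) * s69 := by
      have h1 : |(k : ℝ) * s69| = Kr * s69 := by
        rw [abs_mul, abs_of_pos s69_pos]
      linarith [neg_abs_le ((k : ℝ) * s69)]
    -- identity
    have hid : ((3 * (k : ℝ) + s69) ^ 2 - 69 * (j : ℝ) ^ 2) *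
        (((3 * (k : ℝ) + s69) ^ 2 - 69 * (j : ℝ) ^ 2) - 12 * (k : ℝ) * s69) =
        9 * ((u1 * u2 : ℤ) : ℝ) := by
      rw [hu1def, hu2def]
      push_cast
      linear_combination (s69 ^ 2 + 69 - 18 * (k : ℝ) ^ 2 - 138 * (j : ℝ) ^ 2) * s69_sq
    set Xr : ℝ := (3 * (k : ℝ) + s69) ^ 2 - 69 * (j : ℝ) ^ 2 with hXr
    set Yr : ℝ := Xr - 12 * (k : ℝ) * s69 with hYr
    have htri : |Yr| ≤ |Xr| + 12 * Kr * s69 := by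
      have h1 : |Yr| ≤ |Xr| + |12 * (k : ℝ) * s69| := by
        rw [hYr]
        simpa [sub_eq_add_neg] using abs_add_le Xr (-(12 * (k : ℝ) * s69))
      have h2 : |12 * (k : ℝ) * s69| = 12 * Kr * s69 := by
        rw [abs_mul, abs_mul, abs_of_pos s69_pos]
        norm_num [hKr]
      linarith
    have hKr0 : (0 : ℝ) ≤ Kr := by linarith
    have hCK : (0 : ℝ) < (990 - 90 * s69) + 12 * Kr * s69 := by
      nlinarith [s69_ub, mul_nonneg hKr0 (le_of_lt s69_pos)]
    have h9U : 9 * ((|u1 * u2| : ℤ) : ℝ) < (990 - 90 * s69) * ((990 - 90 * s69) + 12 * Kr * s69) := by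
      have e1 : 9 * ((|u1 * u2| : ℤ) : ℝ) = |Xr| * |Yr| := by
        rw [Int.cast_abs, ← abs_mul, hid]
        rw [abs_mul]
        norm_num [abs_of_nonneg]
      rw [e1]
      have h1 : |Xr| * |Yr| ≤ |Xr| * ((990 - 90 * s69) + 12 * Kr * s69) := by
        apply mul_le_mul_of_nonneg_left _ (abs_nonneg Xr)
        calc |Yr| ≤ |Xr| + 12 * Kr * s69 := htri
          _ ≤ (990 - 90 * s69) + 12 * Kr * s69 := by linarith [hcon]
      have h2 : |Xr| * ((990 - 90 * s69) + 12 * Kr * s69) <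
          (990 - 90 * s69) * ((990 - 90 * s69) + 12 * Kr * s69) :=
        mul_lt_mul_of_pos_right hcon hCK
      linarith
    have hbdR : 82800 * Jr - 90000 ≤ 9 * ((|u1 * u2| : ℤ) : ℝ) := by
      have hc : (9200 : ℝ) * |(j : ℝ)| - 10000 ≤ ((|u1 * u2| : ℤ) : ℝ) := by
        exact_mod_cast hbd
      rw [hJr]
      linarith
    have hexp : (990 - 90 * s69) * ((990 - 90 * s69) + 12 * Kr * s69) =
        1539000 - 178200 * s69 + (11880 * s69 - 74520) * Kr := by
      linear_combination (8100 - 1080 * Kr) * s69_sq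
    have hP : 82800 * Jr < 1629000 - 178200 * s69 + (11880 * s69 - 74520) * Kr := by
      rw [hexp] at h9U
      linarith
    have hj2 : 9 * Kr ^ 2 - 6 * Kr * s69 + 90 * s69 - 921 < 69 * Jr ^ 2 := by
      have hXexp : Xr = 9 * (k : ℝ) ^ 2 + 6 * ((k : ℝ) * s69) + s69 ^ 2 - 69 * (j : ℝ) ^ 2 := by
        rw [hXr]; ring
      rw [hXexp] at hhi
      rw [hJsq, hKsq] at hhi
      linarith [hks, s69_sq, hhi]
    -- final contradiction
    have hPpos : (0 : ℝ) < 1629000 - 178200 * s69 + (11880 * s69 - 74520) * Kr := by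
      nlinarith [mul_nonneg (sub_nonneg.mpr hK53)
        (by nlinarith [s69_lb] : (0 : ℝ) ≤ 11880 * s69 - 74520), s69_lb, s69_ub]
    have hsqP : (82800 * Jr) ^ 2 < (1629000 - 178200 * s69 + (11880 * s69 - 74520) * Kr) ^ 2 := by
      have h0 : 0 ≤ 82800 * Jr := by positivity
      nlinarith [mul_self_lt_mul_self h0 hP]
    have e2 : s69 ^ 2 * Kr ^ 2 = 69 * Kr ^ 2 := by rw [s69_sq]
    have e3 : s69 ^ 2 * Kr = 69 * Kr := by rw [s69_sq]
    have hQ : 69 * (1629000 - 178200 * s69 + (11880 * s69 - 74520) * Kr) ^ 2 <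
        82800 ^ 2 * (9 * Kr ^ 2 - 6 * Kr * s69 + 90 * s69 - 921) := by
      linarith [e2, e3, s69_sq, s69_ub,
        mul_nonneg (mul_nonneg (sub_nonneg.mpr hK53) (sub_nonneg.mpr hK53))
          (le_of_lt (sub_pos.mpr s69_lb)),
        mul_nonneg (sub_nonneg.mpr hK53) (le_of_lt (sub_pos.mpr s69_lb)),
        sq_nonneg (Kr - 53), sub_nonneg.mpr hK53, sub_pos.mpr s69_lb]
    linarith [hj2, hsqP, hQ]

/-- Global lower bound for the product of the two linear forms. -/
private lemma lowerb (a b : ℤ) :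
    (165 - 15 * s69) / 46 ≤
      |(1 + (4 / 23) * s69) - ((a : ℝ) + (b : ℝ) * ((1 + s69) / 2))| *
      |(-(4 / 23) * s69) - ((a : ℝ) + (b : ℝ) * ((1 - s69) / 2))| := by
  rw [← abs_mul]
  have hc := core (2 * a + b - 1) (8 - 23 * b) ⟨b, rfl⟩ (by omega)
  have h276 : (276 : ℝ) *
      (((1 + (4 / 23) * s69) - ((a : ℝ) + (b : ℝ) * ((1 + s69) / 2))) *
       ((-(4 / 23) * s69) - ((a : ℝ) + (b : ℝ) * ((1 - s69) / 2)))) =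
      -((3 * ((8 - 23 * b : ℤ) : ℝ) + s69) ^ 2 - 69 * ((2 * a + b - 1 : ℤ) : ℝ) ^ 2) := by
    push_cast
    linear_combination (1 - 3 * (8 - 23 * (b : ℝ)) ^ 2 / 23) * s69_sq
  have habs : (276 : ℝ) *
      |((1 + (4 / 23) * s69) - ((a : ℝ) + (b : ℝ) * ((1 + s69) / 2))) *
       ((-(4 / 23) * s69) - ((a : ℝ) + (b : ℝ) * ((1 - s69) / 2)))| =
      |(3 * ((8 - 23 * b : ℤ) : ℝ) + s69) ^ 2 - 69 * ((2 * a + b - 1 : ℤ) : ℝ) ^ 2| := by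
    rw [show (276 : ℝ) = |276| by norm_num, ← abs_mul, h276, abs_neg]
  linarith [hc, habs]

theorem inhomogeneous_minimum_P0_sqrt69 :
    (⨅ p : ℤ × ℤ,
        |(1 + (4 / 23) * s69) - ((p.1 : ℝ) + (p.2 : ℝ) * ((1 + s69) / 2))| *
        |(-(4 / 23) * s69) - ((p.1 : ℝ) + (p.2 : ℝ) * ((1 - s69) / 2))|) =
      (165 - 15 * s69) / 46 ∧
    |(1 + (4 / 23) * s69) - (5 + s69) / 2| * |(-(4 / 23) * s69) - (5 - s69) / 2| =
      (165 - 15 * s69) / 46 := by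
  have hval : |(1 + (4 / 23) * s69) - (5 + s69) / 2| * |(-(4 / 23) * s69) - (5 - s69) / 2| =
      (165 - 15 * s69) / 46 := by
    have h1 : (1 + (4 / 23) * s69) - (5 + s69) / 2 = -(3 / 2 + (15 / 46) * s69) := by ring
    have h2 : (-(4 / 23) * s69) - (5 - s69) / 2 = (15 / 46) * s69 - 5 / 2 := by ring
    rw [h1, h2, abs_neg, abs_of_pos (by nlinarith [s69_pos] : (0:ℝ) < 3 / 2 + (15 / 46) * s69),
      abs_of_pos (by nlinarith [s69_lb] : (0:ℝ) < (15 / 46) * s69 - 5 / 2)]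
    linear_combination (225 / 2116) * s69_sq
  constructor
  · apply le_antisymm
    · have : |(1 + (4 / 23) * s69) - (((2:ℤ) : ℝ) + ((1:ℤ) : ℝ) * ((1 + s69) / 2))| *
          |(-(4 / 23) * s69) - (((2:ℤ) : ℝ) + ((1:ℤ) : ℝ) * ((1 - s69) / 2))| =
          (165 - 15 * s69) / 46 := by
        rw [show (((2:ℤ) : ℝ) + ((1:ℤ) : ℝ) * ((1 + s69) / 2)) = (5 + s69) / 2 by push_cast; ring,
          show (((2:ℤ) : ℝ) + ((1:ℤ) : ℝ) * ((1 - s69) / 2)) = (5 - s69) / 2 by push_cast; ring]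
        exact hval
      calc (⨅ p : ℤ × ℤ,
          |(1 + (4 / 23) * s69) - ((p.1 : ℝ) + (p.2 : ℝ) * ((1 + s69) / 2))| *
          |(-(4 / 23) * s69) - ((p.1 : ℝ) + (p.2 : ℝ) * ((1 - s69) / 2))|) ≤
          |(1 + (4 / 23) * s69) - (((2:ℤ) : ℝ) + ((1:ℤ) : ℝ) * ((1 + s69) / 2))| *
          |(-(4 / 23) * s69) - (((2:ℤ) : ℝ) + ((1:ℤ) : ℝ) * ((1 - s69) / 2))| := by
            apply ciInf_le ⟨(165 - 15 * s69) / 46, ?_⟩ ((2 : ℤ), (1 : ℤ))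
            rintro x ⟨p, rfl⟩
            exact lowerb p.1 p.2
        _ = (165 - 15 * s69) / 46 := this
    · exact le_ciInf fun p => lowerb p.1 p.2
  · exact hval

end
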